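/- arXiv:1110.6683 — 4 statements merged into one kernel-verified Lean document; each statement's English description precedes it below -/
import Mathlib

section
/- Let G be a finite group, N a normal subgroup of G containing a non-identity element, and χ an irreducible complex character of G. Then N contains a non-identity element x with χ(x) ≠ 0. -/
open CategoryTheory

/-- If `N` is a normal subgroup of a finite group `G` containing a non-identity element and
`χ` is an irreducible complex character of `G`, then `N` contains a non-identity element on
which `χ` does not vanish. -/
theorem normal_subgroup_meets_support (G : Type) [Group G] [Fintype G]
    (N : Subgroup G) [N.Normal] (hN : ∃ n ∈ N, n ≠ 1)
    (V : FDRep ℂ G) [Simple V] :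
    ∃ x ∈ N, x ≠ 1 ∧ V.character x ≠ 0 := by
  by_contra hcon
  push_neg at hcon
  have hvan : ∀ n : G, n ∈ N → n ≠ 1 → V.character n = 0 := fun n hn hne =>
    by_contra fun h => h (hcon n hn hne)
  classical
  haveI : Fintype N := Fintype.ofFinite N
  set T : V →ₗ[ℂ] V := ∑ n : N, V.ρ (n : G) with hT
  have hcomm : ∀ g : G, V.ρ g * T = T * V.ρ g := by
    intro g
    have hbij : Function.Bijective (fun n : N => (⟨g * n * g⁻¹,
        Subgroup.Normal.conj_mem ‹N.Normal› n n.2 g⟩ : N)) := by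
      constructor
      · intro a b hab
        have h2 : (g * a * g⁻¹ : G) = g * b * g⁻¹ := congrArg (fun x : N => (x : G)) hab
        ext
        exact mul_left_cancel (mul_right_cancel h2)
      · intro b
        refine ⟨⟨g⁻¹ * b * g, by simpa using Subgroup.Normal.conj_mem ‹N.Normal› b b.2 g⁻¹⟩, ?_⟩
        ext
        simp [mul_assoc]
    calc V.ρ g * T = ∑ n : N, V.ρ g * V.ρ (n : G) := by rw [hT, Finset.mul_sum]
      _ = ∑ n : N, V.ρ ((g * n * g⁻¹ : G)) * V.ρ g := by
          refine Finset.sum_congr rfl fun n _ => ?_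
          rw [← map_mul, ← map_mul]
          congr 1
          group
      _ = (∑ n : N, V.ρ ((g * n * g⁻¹ : G))) * V.ρ g := by rw [Finset.sum_mul]
      _ = T * V.ρ g := by
          rw [hT]
          congr 1
          exact Fintype.sum_bijective _ hbij _ _ fun n => rfl
  let f : V ⟶ V := ⟨FGModuleCat.ofHom T, fun g => by
    ext v
    exact congrFun (congrArg (fun L : V →ₗ[ℂ] V => (L : V → V)) (hcomm g).symm) v⟩
  obtain ⟨c, hc⟩ := endomorphism_simple_eq_smul_id ℂ f
  have hTc : T = c • LinearMap.id := (congrArg (fun φ : V ⟶ V => φ.hom.hom.hom) hc).symm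
  have hTT : T * T = (Fintype.card N : ℂ) • T := by
    calc T * T = ∑ n : N, V.ρ (n : G) * ∑ m : N, V.ρ (m : G) := by rw [hT, Finset.sum_mul]
      _ = ∑ n : N, ∑ m : N, V.ρ (n : G) * V.ρ (m : G) := by
          exact Finset.sum_congr rfl fun n _ => Finset.mul_sum _ _ _
      _ = ∑ n : N, ∑ m : N, V.ρ (((n * m : N) : G)) := by
          exact Finset.sum_congr rfl fun n _ => Finset.sum_congr rfl fun m _ => (map_mul _ _ _).symm
      _ = ∑ n : N, ∑ m : N, V.ρ ((m : N) : G) := by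
          refine Finset.sum_congr rfl fun n _ => ?_
          exact Fintype.sum_equiv (Equiv.mulLeft n) _ _ fun m => rfl
      _ = (Fintype.card N : ℂ) • ∑ m : N, V.ρ ((m : G)) := by
          rw [Finset.sum_const, Finset.card_univ, ← Nat.cast_smul_eq_nsmul ℂ]
  have hne1 : (𝟙 V : V ⟶ V) ≠ 0 := id_nonzero V
  have hid_ne : (LinearMap.id : V →ₗ[ℂ] V) ≠ 0 := by
    intro h
    apply hne1
    apply Action.hom_ext
    apply FGModuleCat.hom_ext
    exact h
  have hcc : c * c = (Fintype.card N : ℂ) * c := by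
    rw [hTc] at hTT
    have h2 : (c * c) • (LinearMap.id : V →ₗ[ℂ] V)
        = ((Fintype.card N : ℂ) * c) • LinearMap.id := by
      simpa [smul_smul, smul_mul_assoc, mul_smul_comm, mul_comm, Module.End.mul_eq_comp, LinearMap.id_comp] using hTT
    by_contra hne
    apply hid_ne
    have h0 : ((c * c - (Fintype.card N : ℂ) * c)) • (LinearMap.id : V →ₗ[ℂ] V) = 0 := by
      rw [sub_smul, h2, sub_self]
    have h3 := congrArg (fun L => (c * c - (Fintype.card N : ℂ) * c)⁻¹ • L) h0
    simpa [smul_smul, inv_mul_cancel₀ (sub_ne_zero.mpr hne)] using h3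
  have htr : LinearMap.trace ℂ V T = (Module.finrank ℂ V : ℂ) := by
    rw [hT, map_sum, Fintype.sum_eq_single (1 : N)]
    · show V.character ((1 : N) : G) = _
      simp [FDRep.char_one]
    · intro m hm
      have hm1 : ((m : G)) ≠ 1 := fun h => hm (by ext; simpa using h)
      exact hvan m m.2 hm1
  have htr2 : LinearMap.trace ℂ V T = c * (Module.finrank ℂ V : ℂ) := by
    rw [hTc, map_smul, LinearMap.trace_id]
    simp [mul_comm]
  have hd : (Module.finrank ℂ V : ℂ) ≠ 0 := by
    have h4 : Module.finrank ℂ V ≠ 0 := by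
      intro h
      apply hne1
      haveI : Subsingleton V := Module.finrank_zero_iff (R := ℂ) (M := V) |>.mp h
      apply Action.hom_ext
      ext v
      exact (Subsingleton.elim (α := V) _ _ : _)
    exact_mod_cast h4
  have hcd : c * (Module.finrank ℂ V : ℂ) = (Module.finrank ℂ V : ℂ) := by
    rw [← htr2, htr]
  have hc1 : c = 1 :=
    mul_right_cancel₀ hd (by rw [hcd, one_mul] : c * _ = 1 * (Module.finrank ℂ V : ℂ))
  have hcard : (Fintype.card N : ℂ) = 1 := by
    have h5 := hcc
    rw [hc1, mul_one, mul_one] at h5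
    exact h5.symm
  have hcardN : Fintype.card N = 1 := by exact_mod_cast hcard
  obtain ⟨n, hn, hne⟩ := hN
  have heq : (⟨n, hn⟩ : N) = (1 : N) := by
    haveI : Subsingleton N := Fintype.card_le_one_iff_subsingleton.mp hcardN.le
    exact Subsingleton.elim _ _
  exact hne (by simpa using congrArg (fun x : N => (x : G)) heq)
end

section
/- Let G be a finite group with |G| ≥ 2, and let S be a finite set of irreducible complex characters of G each of which is absolutely idempotent (i.e., |χ(x)| ∈ {0, d_χ} for all x). Then the intersection ⋂_{χ∈S} Z(χ) of their centres contains a non-identity element, where Z(χ) = {x ∈ G : |χ(x)| = d_χ}. -/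
open CategoryTheory

open Polynomial Module

-- all roots of charpoly are n-th roots of unity
lemma charpoly_root_pow {d n : ℕ} (M : Matrix (Fin d) (Fin d) ℂ)
    (hM : M ^ n = 1) {μ : ℂ} (hμ : μ ∈ M.charpoly.roots) : μ ^ n = 1 := by
  classical
  have hroot : M.charpoly.IsRoot μ := (Polynomial.mem_roots'.mp hμ).2
  have hdet : (Matrix.scalar (Fin d) μ - M).det = 0 := by
    have h1 := _root_.eval_det (Matrix.charmatrix M) μ
    rw [Matrix.matPolyEquiv_charmatrix] at h1
    have h2 : Polynomial.eval (Matrix.scalar (Fin d) μ) (X - C M)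
        = Matrix.scalar (Fin d) μ - M := by simp
    rw [h2] at h1
    rw [← h1]
    exact hroot
  obtain ⟨v, hv0, hv⟩ := Matrix.exists_mulVec_eq_zero_iff.mpr hdet
  have hsc : Matrix.scalar (Fin d) μ = μ • (1 : Matrix (Fin d) (Fin d) ℂ) := by
    ext i j
    by_cases h : i = j <;> simp [Matrix.scalar_apply, Matrix.one_apply, h]
  have hMv : M.mulVec v = μ • v := by
    have h3 : (Matrix.scalar (Fin d) μ).mulVec v - M.mulVec v = 0 := by
      rw [← Matrix.sub_mulVec]; exact hv
    have h4 : (Matrix.scalar (Fin d) μ).mulVec v = μ • v := by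
      rw [hsc, Matrix.smul_mulVec, Matrix.one_mulVec]
    rw [h4] at h3
    have := sub_eq_zero.mp h3
    exact this.symm
  have hpow : ∀ k : ℕ, (M ^ k).mulVec v = μ ^ k • v := by
    intro k
    induction k with
    | zero => simp [Matrix.one_mulVec]
    | succ k ih =>
      rw [pow_succ', ← Matrix.mulVec_mulVec, ih, Matrix.mulVec_smul, hMv, smul_smul,
        ← pow_succ]
  have h5 : (μ ^ n - 1) • v = 0 := by
    have := hpow n
    rw [hM, Matrix.one_mulVec] at this
    rw [sub_smul, one_smul, ← this]
    abel
  obtain ⟨j, hj⟩ := Function.ne_iff.mp hv0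
  have h6 : (μ ^ n - 1) * v j = 0 := congrFun h5 j
  rcases mul_eq_zero.mp h6 with h | h
  · exact sub_eq_zero.mp h
  · exact absurd h (by simpa using hj)

-- multisets of reals bounded by 1 summing to card are all 1
lemma multiset_all_one (s : Multiset ℝ) (h : ∀ x ∈ s, x ≤ 1)
    (hs : (Multiset.card s : ℝ) ≤ s.sum) : ∀ x ∈ s, x = 1 := by
  induction s using Multiset.induction with
  | empty => simp
  | cons a s ih =>
    have hle : s.sum ≤ (Multiset.card s : ℝ) * 1 := by
      have := Multiset.sum_le_card_nsmul s 1 (fun x hx => h x (Multiset.mem_cons_of_mem hx))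
      simpa [nsmul_eq_mul] using this
    have ha : a ≤ 1 := h a (Multiset.mem_cons_self a s)
    have hsum : (Multiset.card (a ::ₘ s) : ℝ) ≤ a + s.sum := by simpa using hs
    simp only [Multiset.card_cons] at hsum
    push_cast at hsum
    have ha1 : a = 1 := by linarith
    intro x hx
    rcases Multiset.mem_cons.mp hx with rfl | hx
    · exact ha1
    · exact ih (fun y hy => h y (Multiset.mem_cons_of_mem hy)) (by linarith) x hx


lemma complex_eq_one {z : ℂ} (hre : z.re = 1) (hn : ‖z‖ = 1) : z = 1 := by
  have h1 : Complex.normSq z = 1 := by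
    rw [Complex.normSq_eq_norm_sq, hn, one_pow]
  rw [Complex.normSq_apply, hre] at h1
  have h2 : z.im * z.im = 0 := by nlinarith
  have h3 : z.im = 0 := by
    rcases mul_self_eq_zero.mp h2 with h; exact h
  exact Complex.ext (by simpa using hre) (by simpa using h3)

lemma matrix_eq_smul_one {d n : ℕ} (hd : 0 < d) (hn : 0 < n)
    (M : Matrix (Fin d) (Fin d) ℂ) (hM : M ^ n = 1)
    (htr : ‖M.trace‖ = (d : ℝ)) : ∃ c : ℂ, M = c • 1 := by
  classical
  haveI : Nonempty (Fin d) := ⟨⟨0, hd⟩⟩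
  set q := M.charpoly with hq
  have hmon : q.Monic := M.charpoly_monic
  have hdeg : q.natDegree = d := by rw [hq, M.charpoly_natDegree_eq_dim, Fintype.card_fin]
  have hsplit : q.Splits := IsAlgClosed.splits q
  have hcard : (Multiset.card q.roots) = d := (splits_iff_card_roots.mp hsplit).trans hdeg
  have hnorm : ∀ μ ∈ q.roots, ‖μ‖ = 1 := by
    intro μ hμ
    have h1 : μ ^ n = 1 := charpoly_root_pow M hM hμ
    have h2 : ‖μ‖ ^ n = 1 := by rw [← norm_pow, h1, norm_one]
    rcases lt_trichotomy ‖μ‖ 1 with h | h | h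
    · exfalso
      have := pow_lt_one₀ (norm_nonneg μ) h hn.ne'
      rw [h2] at this; exact lt_irrefl _ this
    · exact h
    · exfalso
      have := one_lt_pow₀ h hn.ne'
      rw [h2] at this; exact lt_irrefl _ this
  have htr' : M.trace = q.roots.sum := M.trace_eq_sum_roots_charpoly
  have hdC : (d : ℂ) ≠ 0 := by exact_mod_cast hd.ne'
  set c : ℂ := M.trace / d with hc
  have hcnorm : ‖c‖ = 1 := by
    rw [hc, norm_div, htr]
    simp
    exact_mod_cast hd.ne'
  have hms : (starRingEnd ℂ) M.trace * M.trace = ((d : ℂ)) ^ 2 := by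
    calc (starRingEnd ℂ) M.trace * M.trace = M.trace * (starRingEnd ℂ) M.trace := mul_comm _ _
      _ = ((Complex.normSq M.trace : ℝ) : ℂ) := Complex.mul_conj _
      _ = (((d : ℝ) ^ 2 : ℝ) : ℂ) := by rw [Complex.normSq_eq_norm_sq, htr]
      _ = (d : ℂ) ^ 2 := by push_cast; ring
  have h5 : (starRingEnd ℂ) c * q.roots.sum = (d : ℂ) := by
    rw [← htr', hc, map_div₀, map_natCast, div_mul_eq_mul_div, hms, sq, mul_div_assoc,
      div_self hdC, mul_one]
  -- the multiset of real parts
  have h3 : (q.roots.map (fun μ => ((starRingEnd ℂ) c * μ).re)).sum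
      = ((starRingEnd ℂ) c * q.roots.sum).re := by
    have h4 : (q.roots.map (fun μ => ((starRingEnd ℂ) c * μ).re))
        = ((q.roots.map (fun μ => (starRingEnd ℂ) c * μ)).map Complex.reAddGroupHom) := by
      rw [Multiset.map_map]; rfl
    rw [h4, ← map_multiset_sum]
    have h6 : (q.roots.map (fun μ => (starRingEnd ℂ) c * μ)).sum
        = (starRingEnd ℂ) c * q.roots.sum := by
      rw [show q.roots.sum = (q.roots.map (fun μ => μ)).sum by rw [Multiset.map_id'],
        ← Multiset.sum_map_mul_left]
    rw [h6]; rfl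
  have hre1 : ∀ μ ∈ q.roots, ((starRingEnd ℂ) c * μ).re = 1 := by
    have := multiset_all_one (q.roots.map (fun μ => ((starRingEnd ℂ) c * μ).re))
      (by
        intro x hx
        obtain ⟨μ, hμ, rfl⟩ := Multiset.mem_map.mp hx
        calc ((starRingEnd ℂ) c * μ).re ≤ ‖(starRingEnd ℂ) c * μ‖ := Complex.re_le_norm _
          _ = 1 := by rw [norm_mul, RCLike.norm_conj, hcnorm, hnorm μ hμ, one_mul])
      (by
        rw [h3, h5, Multiset.card_map, hcard]
        simp)
    intro μ hμ
    exact this _ (Multiset.mem_map_of_mem _ hμ)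
  have hkey : ∀ μ ∈ q.roots, μ = c := by
    intro μ hμ
    have hz : (starRingEnd ℂ) c * μ = 1 :=
      complex_eq_one (hre1 μ hμ)
        (by rw [norm_mul, RCLike.norm_conj, hcnorm, hnorm μ hμ, one_mul])
    have hcc : c * (starRingEnd ℂ) c = 1 := by
      rw [Complex.mul_conj]
      rw [Complex.normSq_eq_norm_sq, hcnorm]
      simp
    calc μ = (c * (starRingEnd ℂ) c) * μ := by rw [hcc, one_mul]
      _ = c * ((starRingEnd ℂ) c * μ) := by ring
      _ = c := by rw [hz, mul_one]
  -- charpoly = (X - C c)^d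
  have hqfact : q = (X - C c) ^ d := by
    have hroots : q.roots = Multiset.replicate d c :=
      Multiset.eq_replicate.mpr ⟨hcard, hkey⟩
    conv_lhs => rw [hsplit.eq_prod_roots_of_monic hmon]
    rw [hroots, Multiset.map_replicate, Multiset.prod_replicate]
  -- minpoly considerations
  have hint : IsIntegral ℂ M := ⟨q, hmon, M.aeval_self_charpoly⟩
  have hmdvd : minpoly ℂ M ∣ (X - C c) ^ d := by
    rw [← hqfact]; exact M.minpoly_dvd_charpoly
  have hXn : (X ^ n - 1 : ℂ[X]).Separable := by
    have := Polynomial.separable_X_pow_sub_C (1 : ℂ) (by exact_mod_cast hn.ne') one_ne_zero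
    simpa using this
  have hmdvd2 : minpoly ℂ M ∣ (X ^ n - 1 : ℂ[X]) := by
    apply minpoly.dvd
    rw [map_sub, map_pow, Polynomial.aeval_X, map_one, hM, sub_self]
  have hsqf : Squarefree (minpoly ℂ M) := (hXn.squarefree).squarefree_of_dvd hmdvd2
  obtain ⟨i, hi, ha⟩ := (dvd_prime_pow (Polynomial.prime_X_sub_C c) d).mp hmdvd
  have hmono : (minpoly ℂ M).Monic := minpoly.monic hint
  have hi1 : i = 1 := by
    rcases Nat.lt_or_ge i 1 with h | h
    · exfalso
      interval_cases i
      rw [pow_zero] at ha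
      have hu : IsUnit (minpoly ℂ M) := associated_one_iff_isUnit.mp ha
      have := minpoly.natDegree_pos (A := ℂ) (x := M) hint
      rw [Polynomial.natDegree_eq_zero_of_isUnit hu] at this
      exact lt_irrefl _ this
    · rcases Nat.lt_or_ge i 2 with h2 | h2
      · omega
      · exfalso
        have hsq2 : Squarefree ((X - C c) ^ i : ℂ[X]) := by
          have hdvd' : ((X - C c) ^ i : ℂ[X]) ∣ minpoly ℂ M := ha.symm.dvd
          exact hsqf.squarefree_of_dvd hdvd'
        have : IsUnit ((X - C c : ℂ[X])) := by
          apply hsq2 (X - C c)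
          calc (X - C c : ℂ[X]) * (X - C c) = (X - C c) ^ 2 := (sq _).symm
            _ ∣ (X - C c) ^ i := pow_dvd_pow _ h2
        exact (Polynomial.prime_X_sub_C c).not_unit this
  have hmeq : minpoly ℂ M = X - C c := by
    rw [hi1, pow_one] at ha
    exact Polynomial.eq_of_monic_of_associated hmono (Polynomial.monic_X_sub_C c) ha
  have := minpoly.aeval ℂ M
  rw [hmeq, map_sub, Polynomial.aeval_X, Polynomial.aeval_C, sub_eq_zero] at this
  refine ⟨c, ?_⟩
  rw [this, Algebra.algebraMap_eq_smul_one]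

lemma end_eq_smul_one {V : Type} [AddCommGroup V] [Module ℂ V] [FiniteDimensional ℂ V]
    (hd : 0 < finrank ℂ V) {n : ℕ} (hn : 0 < n) (A : V →ₗ[ℂ] V) (hA : A ^ n = 1)
    (htr : ‖LinearMap.trace ℂ V A‖ = (finrank ℂ V : ℝ)) :
    ∃ c : ℂ, A = c • (1 : V →ₗ[ℂ] V) := by
  classical
  let b := Module.finBasis ℂ V
  let e := LinearMap.toMatrixAlgEquiv b
  have hM : (e A) ^ n = 1 := by rw [← map_pow, hA, map_one]
  have htrM : ‖(e A).trace‖ = (finrank ℂ V : ℝ) := by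
    have h1 : LinearMap.trace ℂ V A = (e A).trace := LinearMap.trace_eq_matrix_trace ℂ b A
    rw [← h1, htr]
  obtain ⟨c, hc⟩ := matrix_eq_smul_one hd hn (e A) hM htrM
  refine ⟨c, ?_⟩
  have := congrArg e.symm (hc)
  rw [AlgEquiv.symm_apply_apply, map_smul, map_one] at this
  exact this

lemma norm_eq_one_of_pow_eq_one' {c : ℂ} {n : ℕ} (hn : 0 < n) (h : c ^ n = 1) : ‖c‖ = 1 := by
  have h2 : ‖c‖ ^ n = 1 := by rw [← norm_pow, h, norm_one]
  rcases lt_trichotomy ‖c‖ 1 with h' | h' | h'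
  · exfalso
    have := pow_lt_one₀ (norm_nonneg c) h' hn.ne'
    rw [h2] at this; exact lt_irrefl _ this
  · exact h'
  · exfalso
    have := one_lt_pow₀ h' hn.ne'
    rw [h2] at this; exact lt_irrefl _ this

section Rep

open CategoryTheory Module

variable {G : Type} [Group G] [Fintype G]

lemma FDRep_finrank_pos (W : FDRep ℂ G) [Simple W] : 0 < finrank ℂ W := by
  by_contra h
  push_neg at h
  have h0 : finrank ℂ W = 0 := Nat.le_zero.mp h
  have hsub : Subsingleton W := Module.finrank_zero_iff.mp h0
  have hzero : (𝟙 W : W ⟶ W) = 0 := by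
    apply Action.hom_ext
    apply FGModuleCat.hom_ext
    apply LinearMap.ext
    intro v
    exact @Subsingleton.elim _ hsub _ _
  exact (id_nonzero W) hzero

lemma rho_pow_card (W : FDRep ℂ G) (x : G) : (W.ρ x) ^ (Fintype.card G) = 1 := by
  rw [← map_pow, pow_card_eq_one, map_one]

lemma scalar_c_pow (W : FDRep ℂ G) (hd : 0 < finrank ℂ W) {x : G} {c : ℂ}
    (h : W.ρ x = c • 1) : c ^ (Fintype.card G) = 1 := by
  have h1 := rho_pow_card W x
  rw [h, _root_.smul_pow, one_pow] at h1
  have h2 := congrArg (LinearMap.trace ℂ W) h1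
  rw [LinearMap.map_smul, LinearMap.trace_one] at h2
  have hdC : ((finrank ℂ W : ℂ)) ≠ 0 := by exact_mod_cast hd.ne'
  have h3 : c ^ (Fintype.card G) * (finrank ℂ W : ℂ) = 1 * (finrank ℂ W : ℂ) := by
    rw [one_mul]; exact_mod_cast h2
  exact mul_right_cancel₀ hdC h3

lemma norm_char_of_scalar (W : FDRep ℂ G) (hd : 0 < finrank ℂ W) {x : G} {c : ℂ}
    (h : W.ρ x = c • 1) : ‖W.character x‖ = (finrank ℂ W : ℝ) := by
  have hc : ‖c‖ = 1 := norm_eq_one_of_pow_eq_one' Fintype.card_pos (scalar_c_pow W hd h)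
  have h1 : W.character x = c * (finrank ℂ W : ℂ) := by
    show LinearMap.trace ℂ W (W.ρ x) = _
    rw [h, LinearMap.map_smul, LinearMap.trace_one]
    simp
  rw [h1, norm_mul, hc, one_mul]
  simp

lemma scalar_of_norm_char (W : FDRep ℂ G) (hd : 0 < finrank ℂ W) {x : G}
    (h : ‖W.character x‖ = (finrank ℂ W : ℝ)) : ∃ c : ℂ, W.ρ x = c • 1 :=
  end_eq_smul_one hd Fintype.card_pos (W.ρ x) (rho_pow_card W x) h

/-- The subgroup of elements acting by scalars. -/
def scalarSubgroup (W : FDRep ℂ G) (hd : 0 < finrank ℂ W) : Subgroup G where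
  carrier := {x | ∃ c : ℂ, W.ρ x = c • 1}
  one_mem' := ⟨1, by rw [map_one, one_smul]⟩
  mul_mem' := by
    rintro x y ⟨c, hc⟩ ⟨c', hc'⟩
    exact ⟨c * c', by rw [map_mul, hc, hc', smul_mul_smul_comm, one_mul]⟩
  inv_mem' := by
    rintro x ⟨c, hc⟩
    have hc0 : c ≠ 0 := by
      intro h0
      have := scalar_c_pow W hd hc
      rw [h0, zero_pow Fintype.card_pos.ne'] at this
      exact zero_ne_one this
    refine ⟨c⁻¹, ?_⟩
    have h1 : W.ρ x * W.ρ x⁻¹ = 1 := by rw [← map_mul, mul_inv_cancel, map_one]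
    rw [hc, smul_mul_assoc, one_mul] at h1
    rw [← inv_smul_smul₀ hc0 (W.ρ x⁻¹), h1]

lemma scalarSubgroup_normal (W : FDRep ℂ G) (hd : 0 < finrank ℂ W) :
    (scalarSubgroup W hd).Normal := by
  constructor
  rintro x ⟨c, hc⟩ g
  refine ⟨c, ?_⟩
  rw [map_mul, map_mul, hc, mul_smul_comm, smul_mul_assoc, mul_one, ← map_mul,
    mul_inv_cancel, map_one]

end Rep


/-- If `G` is a finite group with `|G| ≥ 2` and `(V i)` is a finite family of irreducible
complex representations whose characters are absolutely idempotent (`|χ(x)| ∈ {0, d_χ}`),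
then the intersection of the centres `Z(χ_i) = {x | |χ_i(x)| = d_{χ_i}}` contains a
non-identity element. -/
theorem inter_centres_nontrivial (G : Type) [Group G] [Fintype G] [Nontrivial G]
    (ι : Type) [Finite ι] (V : ι → FDRep ℂ G) [∀ i, Simple (V i)]
    (hAI : ∀ i, ∀ x : G, ‖(V i).character x‖ = 0 ∨
      ‖(V i).character x‖ = (Module.finrank ℂ (V i) : ℝ)) :
    ∃ x : G, x ≠ 1 ∧ ∀ i, ‖(V i).character x‖ = (Module.finrank ℂ (V i) : ℝ) := by
  classical
  -- obtain a minimal nontrivial normal subgroup N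
  have hex : ({H : Subgroup G | H.Normal ∧ H ≠ ⊥} : Set (Subgroup G)).Nonempty :=
    ⟨⊤, ⟨inferInstance, by
      intro h
      obtain ⟨x, y, hxy⟩ := exists_pair_ne G
      have hx : x ∈ (⊥ : Subgroup G) := h ▸ Subgroup.mem_top x
      have hy : y ∈ (⊥ : Subgroup G) := h ▸ Subgroup.mem_top y
      rw [Subgroup.mem_bot] at hx hy
      exact hxy (hx.trans hy.symm)⟩⟩
  obtain ⟨N, ⟨hNn, hNbot⟩, hNmin⟩ := Set.Finite.exists_minimalFor
    (fun H : Subgroup G => Nat.card H) _ (Set.toFinite _) hex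
  have hmin' : ∀ M : Subgroup G, M.Normal → M ≤ N → M ≠ ⊥ → M = N := by
    intro M hMn hle hMb
    have h1 : Nat.card M ≤ Nat.card N := Subgroup.card_le_of_le hle
    have h2 : Nat.card N = Nat.card M := le_antisymm (hNmin ⟨hMn, hMb⟩ h1) h1
    exact SetLike.ext' (Set.eq_of_subset_of_ncard_le hle
      (by rw [← Nat.card_coe_set_eq, ← Nat.card_coe_set_eq]; exact h2.le)
      (Set.toFinite _))
  obtain ⟨a, ha⟩ := Subgroup.ne_bot_iff_exists_ne_one.mp hNbot
  refine ⟨(a : G), ?_, ?_⟩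
  · intro h
    exact ha (by ext; exact h)
  intro i
  set W := V i with hW
  have hd : 0 < finrank ℂ W := FDRep_finrank_pos W
  set D := scalarSubgroup W hd with hD
  have hDn := scalarSubgroup_normal W hd
  have hinfn : (N ⊓ D).Normal := ⟨fun y hy g => by
    rw [Subgroup.mem_inf] at hy ⊢
    exact ⟨hNn.conj_mem _ hy.1 g, hDn.conj_mem _ hy.2 g⟩⟩
  by_cases hbot : N ⊓ D = ⊥
  · -- the impossible case : characters vanish on N \ {1}
    exfalso
    have hvan : ∀ y : G, y ∈ N → y ≠ 1 → W.character y = 0 := by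
      intro y hy hy1
      rcases hAI i y with h | h
      · exact norm_eq_zero.mp h
      · exfalso
        obtain ⟨c, hc⟩ := scalar_of_norm_char W hd h
        have hmem : y ∈ N ⊓ D := Subgroup.mem_inf.mpr ⟨hy, ⟨c, hc⟩⟩
        rw [hbot, Subgroup.mem_bot] at hmem
        exact hy1 hmem
    haveI : Fintype ↥N := Fintype.ofFinite _
    set m := Fintype.card ↥N with hm
    have hm1 : 1 < m := Fintype.one_lt_card_iff_nontrivial.mpr ⟨⟨a, 1, ha⟩⟩
    have hmC : ((m : ℂ)) ≠ 0 := Nat.cast_ne_zero.mpr (by omega)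
    set S : W →ₗ[ℂ] W := ∑ y : ↥N, W.ρ (y : G) with hS
    have hconj : ∀ g : G, ∑ y : ↥N, W.ρ ((g * y * g⁻¹ : G)) = S := by
      intro g
      exact Fintype.sum_equiv
        (⟨fun y => (⟨g * y * g⁻¹, hNn.conj_mem _ y.2 g⟩ : ↥N),
          fun y => ⟨g⁻¹ * y * g, by
            have := hNn.conj_mem _ y.2 g⁻¹
            simpa [mul_assoc] using this⟩,
          fun y => by ext; simp [mul_assoc],
          fun y => by ext; simp [mul_assoc]⟩ : ↥N ≃ ↥N)
        (fun y => W.ρ ((g * y * g⁻¹ : G))) (fun y => W.ρ (y : G)) (fun y => rfl)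
    have hcommS : ∀ g : G, S * W.ρ g = W.ρ g * S := by
      intro g
      have h1 : W.ρ g * S = ∑ y : ↥N, W.ρ ((g * y : G)) := by
        rw [hS, Finset.mul_sum]
        exact Finset.sum_congr rfl (fun y _ => by rw [← map_mul])
      have h2 : S * W.ρ g = ∑ y : ↥N, W.ρ ((g * y * g⁻¹ : G)) * W.ρ g := by
        rw [← hconj g, Finset.sum_mul]
      rw [h2, h1]
      exact Finset.sum_congr rfl (fun y _ => by
        rw [← map_mul, inv_mul_cancel_right])
    -- the averaging endomorphism as a morphism of representations
    set f : W ⟶ W := ⟨FGModuleCat.ofHom ((m : ℂ)⁻¹ • S), fun g => by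
      apply FGModuleCat.hom_ext
      show ((m : ℂ)⁻¹ • S) * W.ρ g = W.ρ g * ((m : ℂ)⁻¹ • S)
      rw [smul_mul_assoc, mul_smul_comm, hcommS g]⟩ with hf
    obtain ⟨c, hc⟩ := endomorphism_simple_eq_smul_id ℂ f
    have hhom : c • (1 : W →ₗ[ℂ] W) = (m : ℂ)⁻¹ • S := by
      have h1 := congrArg (fun φ => φ.hom.hom.hom) hc
      exact h1
    -- trace of S
    have htrS : LinearMap.trace ℂ W S = (finrank ℂ W : ℂ) := by
      rw [hS, map_sum]
      rw [Finset.sum_eq_single (1 : ↥N)]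
      · rw [OneMemClass.coe_one, map_one, LinearMap.trace_one]
      · intro y _ hy
        exact hvan (y : G) y.2 (fun h => hy (by ext; exact h))
      · intro h1; exact absurd (Finset.mem_univ _) h1
    -- c = 1/m from the trace
    have hdC : ((finrank ℂ W : ℂ)) ≠ 0 := Nat.cast_ne_zero.mpr hd.ne'
    have hceq : c = (m : ℂ)⁻¹ := by
      have h2 := congrArg (LinearMap.trace ℂ W) hhom
      rw [LinearMap.map_smul, LinearMap.map_smul, LinearMap.trace_one, htrS] at h2
      have h3 : c * (finrank ℂ W : ℂ) = (m : ℂ)⁻¹ * (finrank ℂ W : ℂ) := by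
        simpa [smul_eq_mul] using h2
      exact mul_right_cancel₀ hdC h3
    -- idempotency gives c = 0 or 1
    have hSS : S * S = (m : ℂ) • S := by
      rw [hS, Finset.sum_mul_sum]
      have h4 : ∀ y : ↥N, ∑ z : ↥N, W.ρ (y : G) * W.ρ (z : G) = S := by
        intro y
        have h5 : ∀ z : ↥N, W.ρ (y : G) * W.ρ (z : G) = W.ρ (((y * z : ↥N) : G)) := by
          intro z
          rw [← map_mul]; rfl
        rw [Finset.sum_congr rfl (fun z _ => h5 z)]
        exact Fintype.sum_equiv (Equiv.mulLeft y) _ (fun z => W.ρ (z : G)) (fun z => rfl)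
      rw [Finset.sum_congr rfl (fun y _ => h4 y), Finset.sum_const, Finset.card_univ,
        ← hm, Nat.cast_smul_eq_nsmul]
    have hidem : ((m : ℂ)⁻¹ • S) * ((m : ℂ)⁻¹ • S) = (m : ℂ)⁻¹ • S := by
      rw [smul_mul_assoc, mul_smul_comm, hSS, smul_smul, smul_smul]
      congr 1
      field_simp
    have hc2 : c * c = c := by
      have h6 : (c • (1 : W →ₗ[ℂ] W)) * (c • (1 : W →ₗ[ℂ] W)) = c • (1 : W →ₗ[ℂ] W) := by
        rw [hhom]; exact hidem
      rw [smul_mul_assoc, mul_smul_comm, mul_one, smul_smul] at h6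
      have h7 := congrArg (LinearMap.trace ℂ W) h6
      rw [LinearMap.map_smul, LinearMap.map_smul, LinearMap.trace_one] at h7
      have h8 : (c * c) * (finrank ℂ W : ℂ) = c * (finrank ℂ W : ℂ) := by
        simpa [smul_eq_mul] using h7
      exact mul_right_cancel₀ hdC h8
    rcases mul_eq_zero.mp (by rw [mul_sub, mul_one, hc2, sub_self] : c * (c - 1) = 0) with h | h
    · rw [hceq, inv_eq_zero] at h
      exact hmC h
    · have h9 : c = 1 := sub_eq_zero.mp h
      rw [hceq] at h9
      have h10 : (m : ℂ) = 1 := by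
        field_simp at h9
        exact h9.symm
      have : m = 1 := by exact_mod_cast h10
      omega
  · -- N ≤ D, so a acts by a scalar
    have heq : N ⊓ D = N := hmin' _ hinfn inf_le_left hbot
    have hle : N ≤ D := inf_eq_left.mp heq
    obtain ⟨c, hc⟩ := hle a.2
    exact norm_char_of_scalar W hd hc
end

section
/- Let (G_i)_{i∈I} be a family of finite groups, G = ⊕ G_i, and for each i let χ_i be an irreducible complex character of G_i of degree d_i. Define ω: G → ℂ by ω(x) = Π_i d_i^{-1} χ_i(x_i). Then the ℓ²-norm of ω satisfies ‖ω‖₂ = Π_{i∈I} |G_i|^{1/2}/d_i (interpreted as the supremum over finite subproducts, possibly +∞). In particular ω ∈ ℓ²(G) if and only if Π_{i∈I} |G_i|/d_i² < ∞. -/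
/-- The set of coordinates at which an element of a product of groups is non-trivial. -/
def piSupport {I : Type} {G : I → Type} [∀ i, Group (G i)] (x : ∀ i, G i) : Set I :=
  {i | x i ≠ 1}

private theorem piSupport_mul_finite {I : Type} {G : I → Type} [∀ i, Group (G i)]
    {a b : ∀ i, G i} (ha : (piSupport a).Finite) (hb : (piSupport b).Finite) :
    (piSupport (a * b)).Finite := by
  refine (ha.union hb).subset ?_
  intro i hi
  by_contra hc
  simp only [Set.mem_union, piSupport, Set.mem_setOf_eq, not_or, not_not] at hc
  exact hi (by simp [piSupport, Pi.mul_apply, hc.1, hc.2])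

/-- The restricted direct product of a family of groups: the subgroup of the full product
consisting of families that equal the identity in all but finitely many coordinates. -/
def restrictedProduct {I : Type} (G : I → Type) [∀ i, Group (G i)] :
    Subgroup (∀ i, G i) where
  carrier := {x | (piSupport x).Finite}
  one_mem' := by
    have : piSupport (1 : ∀ i, G i) = ∅ := by
      ext i; simp [piSupport]
    simp only [Set.mem_setOf_eq, this]
    exact Set.finite_empty
  mul_mem' := fun ha hb => piSupport_mul_finite ha hb
  inv_mem' := by
    intro a ha
    have : piSupport a⁻¹ = piSupport a := by
      ext i; simp [piSupport]
    simpa only [Set.mem_setOf_eq, this] using ha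

/-- The "restricted direct product" of a family of subgroups `H i ≤ G i`, viewed as a
subgroup of the full product `Π i, G i`. -/
def restrictedProductOfSubgroups {I : Type} (G : I → Type) [∀ i, Group (G i)]
    (H : ∀ i, Subgroup (G i)) : Subgroup (∀ i, G i) where
  carrier := {x | (piSupport x).Finite ∧ ∀ i, x i ∈ H i}
  one_mem' := by
    refine ⟨?_, fun i => one_mem _⟩
    have : piSupport (1 : ∀ i, G i) = ∅ := by
      ext i; simp [piSupport]
    rw [this]; exact Set.finite_empty
  mul_mem' := fun ha hb =>
    ⟨piSupport_mul_finite ha.1 hb.1, fun i => mul_mem (ha.2 i) (hb.2 i)⟩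
  inv_mem' := by
    intro a ha
    refine ⟨?_, fun i => inv_mem (ha.2 i)⟩
    have : piSupport a⁻¹ = piSupport a := by
      ext i; simp [piSupport]
    rw [this]; exact ha.1

open scoped ENNReal NNReal BigOperators
open CategoryTheory

open Polynomial Matrix CategoryTheory in
theorem aux_eval_charpoly {m : Type*} [Fintype m] [DecidableEq m] (A : Matrix m m ℂ) (x : ℂ) :
    eval x A.charpoly = det ((Matrix.scalar m x) - A) := by
  rw [charpoly, ← coe_evalRingHom, RingHom.map_det]
  congr 1
  ext i j
  rcases eq_or_ne i j with rfl | h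
  · simp [charmatrix_apply_eq]
  · simp [charmatrix_apply_ne _ _ _ h, Matrix.scalar_apply, diagonal_apply_ne _ h]

open Polynomial Matrix in
theorem aux_scalar_eq_smul_one {m : Type*} [Fintype m] [DecidableEq m] (x : ℂ) :
    Matrix.scalar m x = x • (1 : Matrix m m ℂ) := by
  ext i j
  rcases eq_or_ne i j with rfl | h
  · simp [Matrix.scalar_apply, Matrix.one_apply]
  · simp [Matrix.scalar_apply, Matrix.one_apply, h, diagonal_apply_ne _ h]

open Polynomial Matrix in
theorem aux_pow_eq_one_of_root {m : Type*} [Fintype m] [DecidableEq m] (A : Matrix m m ℂ)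
    {k : ℕ} (hA : A ^ k = 1) {μ : ℂ} (hμ : μ ∈ A.charpoly.roots) : μ ^ k = 1 := by
  have hroot : eval μ A.charpoly = 0 := (mem_roots (Matrix.charpoly_monic A).ne_zero).1 hμ
  rw [aux_eval_charpoly] at hroot
  obtain ⟨v, hv, hv0⟩ := (Matrix.exists_mulVec_eq_zero_iff).2 hroot
  have hAv : A.mulVec v = μ • v := by
    have := congrArg (fun w => w + A.mulVec v) hv0
    simpa [Matrix.sub_mulVec, Matrix.smul_mulVec, Matrix.mulVec_smul] using this.symm
  have hpow : ∀ j : ℕ, (A ^ j).mulVec v = μ ^ j • v := by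
    intro j
    induction j with
    | zero => simp
    | succ n ih =>
      rw [pow_succ, pow_succ, ← Matrix.mulVec_mulVec, hAv, Matrix.mulVec_smul, ih, smul_smul,
        mul_comm]
  have := hpow k
  rw [hA] at this
  simp only [Matrix.one_mulVec] at this
  by_contra hne
  exact hv (by
    have : (μ ^ k - 1) • v = 0 := by rw [sub_smul, ← this, one_smul, sub_self]
    have h2 := smul_eq_zero.1 this
    rcases h2 with h2 | h2
    · exact absurd (sub_eq_zero.1 h2) hne
    · exact h2)

open Polynomial Matrix in
theorem aux_charpoly_inv {m : Type*} [Fintype m] [DecidableEq m] (A : Matrix m m ℂ)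
    {k : ℕ} (hk : k ≠ 0) (hA : A ^ k = 1) :
    A⁻¹.charpoly = (A.charpoly.roots.map (fun μ => X - C μ⁻¹)).prod := by
  classical
  have hU : IsUnit A.det := by
    refine IsUnit.of_mul_eq_one (A.det ^ (k-1)) ?_
    rw [← pow_succ', Nat.sub_add_cancel (Nat.one_le_iff_ne_zero.2 hk), ← det_pow, hA, det_one]
  have hμ0 : ∀ μ ∈ A.charpoly.roots, μ ≠ 0 := by
    intro μ hμ h0
    have := aux_pow_eq_one_of_root A hA hμ
    rw [h0, zero_pow hk] at this
    exact zero_ne_one this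
  have hsp : A.charpoly.Splits := IsAlgClosed.splits _
  have hprod : A.charpoly = (A.charpoly.roots.map (fun μ => X - C μ)).prod :=
    (hsp.eq_prod_roots_of_monic (Matrix.charpoly_monic A))
  have hcard : A.charpoly.roots.card = Fintype.card m := by
    rw [(splits_iff_card_roots).1 hsp, Matrix.charpoly_natDegree_eq_dim]
  set r := A.charpoly.roots with hr
  apply eq_of_infinite_eval_eq
  apply Set.Infinite.mono (s := {(0:ℂ)}ᶜ) _ ((Set.finite_singleton (0:ℂ)).infinite_compl)
  intro x hx
  have hx0 : x ≠ 0 := hx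
  simp only [Set.mem_setOf_eq]
  have h1 : Matrix.scalar m x - A⁻¹ = A⁻¹ * (x • A - 1) := by
    rw [Matrix.mul_sub, Matrix.mul_smul, Matrix.nonsing_inv_mul A hU, Matrix.mul_one,
      aux_scalar_eq_smul_one]
  have h2 : x • A - 1 = (-x) • (Matrix.scalar m x⁻¹ - A) := by
    rw [aux_scalar_eq_smul_one, smul_sub, smul_smul, neg_mul, mul_inv_cancel₀ hx0]
    simp [neg_smul, one_smul, sub_eq_add_neg, add_comm]
  have hev : eval x (A⁻¹.charpoly) =
      (A.det)⁻¹ * ((-x) ^ Fintype.card m * (r.map (fun μ => x⁻¹ - μ)).prod) := by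
    rw [aux_eval_charpoly, h1, det_mul, h2, det_smul, Matrix.det_nonsing_inv,
      Ring.inverse_eq_inv']
    congr 2
    rw [← aux_eval_charpoly, hprod]
    rw [eval_multiset_prod, Multiset.map_map]
    congr 1
    apply Multiset.map_congr rfl
    intro μ _; simp
  rw [hev, eval_multiset_prod, Multiset.map_map]
  have hdet : A.det = r.prod := Matrix.det_eq_prod_roots_charpoly A
  have hinvprod : (A.det)⁻¹ = (r.map (fun μ => μ⁻¹)).prod := by
    rw [hdet]
    simpa using (map_multiset_prod (invMonoidHom : ℂ →* ℂ) r)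
  have hxpow : (-x) ^ Fintype.card m = (r.map (fun _ => -x)).prod := by
    rw [Multiset.map_const', Multiset.prod_replicate, hcard]
  rw [hinvprod, hxpow, ← Multiset.prod_map_mul, ← Multiset.prod_map_mul]
  congr 1
  apply Multiset.map_congr rfl
  intro μ hμ
  have hμne : μ ≠ 0 := hμ0 μ hμ
  show μ⁻¹ * (-x * (x⁻¹ - μ)) = eval x (X - C μ⁻¹)
  simp only [eval_sub, eval_X, eval_C]
  field_simp
  ring

theorem aux_conj_of_pow_eq_one {μ : ℂ} {k : ℕ} (hk : k ≠ 0) (h : μ ^ k = 1) :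
    (starRingEnd ℂ) μ = μ⁻¹ := by
  have hnorm : ‖μ‖ = 1 := by
    have h2 : ‖μ‖₊ ^ k = 1 := by rw [← nnnorm_pow, h, nnnorm_one]
    have h3 : ‖μ‖₊ = 1 := (pow_eq_one_iff.1 h2).resolve_right hk
    have := congrArg (fun x : ℝ≥0 => (x : ℝ)) h3
    simpa using this
  have hsq : μ * (starRingEnd ℂ) μ = 1 := by
    rw [Complex.mul_conj]
    norm_cast
    rw [Complex.normSq_eq_norm_sq, hnorm]; norm_num
  exact eq_inv_of_mul_eq_one_right hsq

open Polynomial Matrix in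
theorem aux_trace_inv_eq_star_trace {m : Type*} [Fintype m] [DecidableEq m] (A : Matrix m m ℂ)
    {k : ℕ} (hk : k ≠ 0) (hA : A ^ k = 1) :
    A⁻¹.trace = (starRingEnd ℂ) A.trace := by
  rw [Matrix.trace_eq_sum_roots_charpoly, Matrix.trace_eq_sum_roots_charpoly,
    aux_charpoly_inv A hk hA]
  have h1 : (A.charpoly.roots.map (fun μ => X - C μ⁻¹)).prod.roots
      = A.charpoly.roots.map (fun μ => μ⁻¹) := by
    rw [show (fun μ : ℂ => X - C μ⁻¹) = (fun ν : ℂ => X - C ν) ∘ (fun μ : ℂ => μ⁻¹) from rfl,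
      ← Multiset.map_map, roots_multiset_prod_X_sub_C]
  rw [h1, map_multiset_sum (starRingEnd ℂ)]
  congr 1
  apply Multiset.map_congr rfl
  intro μ hμ
  exact (aux_conj_of_pow_eq_one hk (aux_pow_eq_one_of_root A hA hμ)).symm

theorem aux_fdRep_char_inv {H : Type} [Group H] [Fintype H] (W : FDRep ℂ H) (g : H) :
    W.character g⁻¹ = (starRingEnd ℂ) (W.character g) := by
  classical
  set k := orderOf g with hk
  have hkne : k ≠ 0 := (orderOf_pos g).ne'
  let b := Module.finBasis ℂ W
  set M := LinearMap.toMatrixAlgEquiv b (W.ρ g) with hM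
  have hpow : M ^ k = 1 := by
    rw [hM, ← _root_.map_pow, ← _root_.map_pow, pow_orderOf_eq_one, _root_.map_one,
      _root_.map_one]
  have hMinv : LinearMap.toMatrixAlgEquiv b (W.ρ g⁻¹) = M⁻¹ := by
    refine (Matrix.inv_eq_right_inv ?_).symm
    rw [hM, ← _root_.map_mul, ← _root_.map_mul, mul_inv_cancel, _root_.map_one, _root_.map_one]
  show LinearMap.trace ℂ _ (W.ρ g⁻¹) = (starRingEnd ℂ) (LinearMap.trace ℂ _ (W.ρ g))
  rw [LinearMap.trace_eq_matrix_trace ℂ b, LinearMap.trace_eq_matrix_trace ℂ b]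
  show Matrix.trace (LinearMap.toMatrixAlgEquiv b (W.ρ g⁻¹)) =
    (starRingEnd ℂ) (Matrix.trace (LinearMap.toMatrixAlgEquiv b (W.ρ g)))
  rw [hMinv, ← hM]
  exact aux_trace_inv_eq_star_trace M hkne hpow

theorem aux_sum_norm_sq_character {H : Type} [Group H] [Fintype H] (W : FDRep ℂ H) [Simple W] :
    ∑ g : H, ‖W.character g‖ ^ 2 = (Fintype.card H : ℝ) := by
  classical
  have hc : (Fintype.card H : ℂ) ≠ 0 := Nat.cast_ne_zero.2 Fintype.card_ne_zero
  letI : Invertible ((Nat.card H) : ℂ) := invertibleOfNonzero (by rw [Nat.card_eq_fintype_card]; exact hc)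
  have h := FDRep.char_orthonormal (k := ℂ) (G := H) W W
  rw [if_pos ⟨Iso.refl W⟩] at h
  have h2 : ∑ g : H, W.character g * W.character g⁻¹ = (Fintype.card H : ℂ) := by
    have h' : ((Fintype.card H : ℂ))⁻¹ * ∑ g : H, W.character g * W.character g⁻¹ = 1 := by
      simpa [invOf_eq_inv, smul_eq_mul, Nat.card_eq_fintype_card] using h
    exact ((inv_mul_eq_one₀ hc).1 h').symm
  have h3 : ∑ g : H, ((‖W.character g‖ ^ 2 : ℝ) : ℂ) = (Fintype.card H : ℂ) := by
    rw [← h2]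
    refine Finset.sum_congr rfl fun g _ => ?_
    rw [aux_fdRep_char_inv, Complex.mul_conj, Complex.normSq_eq_norm_sq]
  have h4 : ((∑ g : H, ‖W.character g‖ ^ 2 : ℝ) : ℂ) = ((Fintype.card H : ℝ) : ℂ) := by
    push_cast
    simpa using h3
  exact_mod_cast h4

theorem finrank_pos_of_simple {H : Type} [Group H] (W : FDRep ℂ H) [Simple W] :
    Module.finrank ℂ W ≠ 0 := by
  intro h0
  have hsub : Subsingleton W := by
    have := Module.finrank_zero_iff (R := ℂ) (M := W) |>.1 h0
    exact this
  apply CategoryTheory.id_nonzero W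
  ext v
  exact hsub.elim _ _

theorem factor_sum' {H : Type} [Group H] [Fintype H] (W : FDRep ℂ H) [Simple W] :
    ∑ g : H, ((‖((Module.finrank ℂ W : ℂ))⁻¹ * W.character g‖₊ ^ 2 : ℝ≥0) : ℝ≥0∞)
      = (Fintype.card H : ℝ≥0∞) / ((Module.finrank ℂ W : ℝ≥0∞)) ^ (2 : ℕ) := by
  classical
  set d := Module.finrank ℂ W with hd
  have hd0 : d ≠ 0 := finrank_pos_of_simple W
  have hnn : ∑ g : H, ‖W.character g‖₊ ^ 2 = (Fintype.card H : ℝ≥0) := by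
    apply NNReal.coe_injective
    push_cast
    exact aux_sum_norm_sq_character W
  have key : ∑ g : H, ‖((d : ℂ))⁻¹ * W.character g‖₊ ^ 2
      = (Fintype.card H : ℝ≥0) / (d : ℝ≥0) ^ 2 := by
    have hterm : ∀ g : H, ‖((d : ℂ))⁻¹ * W.character g‖₊ ^ 2
        = (d : ℝ≥0)⁻¹ ^ 2 * ‖W.character g‖₊ ^ 2 := by
      intro g
      rw [nnnorm_mul, nnnorm_inv, mul_pow]
      congr 2
      rw [RCLike.nnnorm_natCast]
    simp_rw [hterm, ← Finset.mul_sum, hnn, div_eq_mul_inv, mul_comm, inv_pow]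
  rw [← ENNReal.coe_finset_sum, key, ENNReal.coe_div (by positivity), ENNReal.coe_pow]
  norm_cast

/-- For a restricted direct product `G = ⊕ᵢ Gᵢ` of finite groups and irreducible complex
characters `χᵢ` of `Gᵢ` of degree `dᵢ`, the function `ω(x) = Πᵢ dᵢ⁻¹ χᵢ(xᵢ)` satisfies
`‖ω‖₂² = Πᵢ |Gᵢ|/dᵢ²` (as a supremum over finite subproducts, possibly `+∞`); in
particular `ω ∈ ℓ²(G)` iff `Πᵢ |Gᵢ|/dᵢ² < ∞`. -/
theorem l2_norm_of_character_of_restrictedProduct (I : Type) (G : I → Type)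
    [∀ i, Group (G i)] [∀ i, Fintype (G i)]
    (V : ∀ i, FDRep ℂ (G i)) [∀ i, Simple (V i)]
    (ω : ↥(restrictedProduct G) → ℂ)
    (hω : ∀ x : ↥(restrictedProduct G),
      ω x = ∏ᶠ i, ((Module.finrank ℂ (V i) : ℂ))⁻¹ * (V i).character (x.1 i)) :
    (∑' x : ↥(restrictedProduct G), ((‖ω x‖₊ : ℝ≥0∞) ^ (2 : ℝ)) =
      ⨆ F : Finset I, ∏ i ∈ F,
        (Fintype.card (G i) : ℝ≥0∞) / ((Module.finrank ℂ (V i) : ℝ≥0∞)) ^ (2 : ℕ)) ∧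
    (Memℓp ω 2 ↔
      (⨆ F : Finset I, ∏ i ∈ F,
        (Fintype.card (G i) : ℝ≥0∞) / ((Module.finrank ℂ (V i) : ℝ≥0∞)) ^ (2 : ℕ)) < ⊤) := by
  classical
  have hd0 : ∀ i, ((Module.finrank ℂ (V i) : ℂ)) ≠ 0 :=
    fun i => Nat.cast_ne_zero.2 (finrank_pos_of_simple (V i))
  have hfin : ∀ x : ↥(restrictedProduct G), (piSupport x.1).Finite := fun x => x.2
  -- Step A
  have hωF : ∀ (x : ↥(restrictedProduct G)) (F : Finset I), piSupport x.1 ⊆ ↑F →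
      ω x = ∏ i ∈ F, ((Module.finrank ℂ (V i) : ℂ))⁻¹ * (V i).character (x.1 i) := by
    intro x F hF
    rw [hω x]
    apply finprod_eq_prod_of_mulSupport_subset
    refine subset_trans ?_ hF
    intro i hi
    simp only [Function.mem_mulSupport] at hi
    by_contra hxi
    simp only [piSupport, Set.mem_setOf_eq, not_not] at hxi
    apply hi
    rw [hxi, FDRep.char_one, inv_mul_cancel₀ (hd0 i)]
  -- extension maps
  have hsupp : ∀ (F : Finset I) (p : ∀ i : F, G i),
      piSupport (fun i => if h : i ∈ F then p ⟨i, h⟩ else 1) ⊆ ↑F := by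
    intro F p i hi
    simp only [piSupport, Set.mem_setOf_eq] at hi
    by_contra hiF
    rw [dif_neg (fun h => hiF (Finset.mem_coe.2 h))] at hi
    exact hi rfl
  have hext_mem : ∀ (F : Finset I) (p : ∀ i : F, G i),
      (fun i => if h : i ∈ F then p ⟨i, h⟩ else 1) ∈ restrictedProduct G :=
    fun F p => Set.Finite.subset F.finite_toSet (hsupp F p)
  set e : ∀ F : Finset I, (∀ i : F, G i) → ↥(restrictedProduct G) :=
    fun F p => ⟨fun i => if h : i ∈ F then p ⟨i, h⟩ else 1, hext_mem F p⟩ with he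
  have he_apply : ∀ (F : Finset I) (p : ∀ i : F, G i) (i : F), (e F p).1 i = p i := by
    intro F p i
    show (if h : (i : I) ∈ F then p ⟨i, h⟩ else 1) = p i
    rw [dif_pos i.2]
  have he_inj : ∀ F : Finset I, Function.Injective (e F) := by
    intro F p q h
    funext i
    have h1 := he_apply F p i
    have h2 := he_apply F q i
    rw [h] at h1
    rw [← h1, h2]
  set f : ↥(restrictedProduct G) → ℝ≥0∞ := fun x => ((‖ω x‖₊ ^ 2 : ℝ≥0) : ℝ≥0∞) with hf
  have hfx : ∀ x, (‖ω x‖₊ : ℝ≥0∞) ^ (2 : ℝ) = f x := by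
    intro x
    rw [show (2 : ℝ) = ((2 : ℕ) : ℝ) by norm_num, ENNReal.rpow_natCast, ← ENNReal.coe_pow]
  -- block sums
  have hterm : ∀ (F : Finset I) (p : ∀ i : F, G i), f (e F p)
      = ∏ i : F, ((‖((Module.finrank ℂ (V i) : ℂ))⁻¹ * (V i).character (p i)‖₊ ^ 2 : ℝ≥0)
          : ℝ≥0∞) := by
    intro F p
    have h1 : ω (e F p) = ∏ i ∈ F,
        ((Module.finrank ℂ (V i) : ℂ))⁻¹ * (V i).character ((e F p).1 i) := hωF _ F (hsupp F p)
    rw [hf]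
    show ((‖ω (e F p)‖₊ ^ 2 : ℝ≥0) : ℝ≥0∞) = _
    rw [h1, nnnorm_prod, ← Finset.prod_pow, ENNReal.coe_finset_prod,
      ← Finset.prod_coe_sort (s := F)]
    refine Finset.prod_congr rfl fun i _ => ?_
    rw [he_apply F p i]
  have hblock : ∀ F : Finset I, ∑ p : (∀ i : F, G i), f (e F p)
      = ∏ i ∈ F, (Fintype.card (G i) : ℝ≥0∞) / ((Module.finrank ℂ (V i) : ℝ≥0∞)) ^ (2 : ℕ) := by
    intro F
    simp_rw [hterm F]
    have hswap : ∑ p : (∀ i : F, G i), ∏ i : F,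
          ((‖((Module.finrank ℂ (V i) : ℂ))⁻¹ * (V i).character (p i)‖₊ ^ 2 : ℝ≥0) : ℝ≥0∞)
        = ∏ i : F, ∑ g : G i,
          ((‖((Module.finrank ℂ (V i) : ℂ))⁻¹ * (V i).character g‖₊ ^ 2 : ℝ≥0) : ℝ≥0∞) := by
      rw [Finset.prod_univ_sum, Fintype.piFinset_univ]
    rw [hswap, ← Finset.prod_coe_sort (s := F)]
    exact Finset.prod_congr rfl fun i _ => factor_sum' (V i)
  have key : ∀ F : Finset I, ∑ x ∈ Finset.image (e F) Finset.univ, f x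
      = ∏ i ∈ F, (Fintype.card (G i) : ℝ≥0∞) / ((Module.finrank ℂ (V i) : ℝ≥0∞)) ^ (2 : ℕ) := by
    intro F
    rw [Finset.sum_image (fun p _ q _ h => he_inj F h), hblock]
  have hmain : ∑' x : ↥(restrictedProduct G), f x =
      ⨆ F : Finset I, ∏ i ∈ F,
        (Fintype.card (G i) : ℝ≥0∞) / ((Module.finrank ℂ (V i) : ℝ≥0∞)) ^ (2 : ℕ) := by
    rw [ENNReal.tsum_eq_iSup_sum]
    apply le_antisymm
    · refine iSup_le fun s => ?_
      set F : Finset I := s.sup (fun x => (hfin x).toFinset) with hF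
      have hsub : s ⊆ Finset.image (e F) Finset.univ := by
        intro x hx
        rw [Finset.mem_image]
        refine ⟨fun i => x.1 i, Finset.mem_univ _, ?_⟩
        apply Subtype.ext
        funext i
        show (if h : i ∈ F then x.1 i else 1) = x.1 i
        by_cases h : i ∈ F
        · rw [dif_pos h]
        · rw [dif_neg h]
          by_contra hne
          apply h
          have hiF : i ∈ (hfin x).toFinset := by
            rw [Set.Finite.mem_toFinset]
            exact fun heq => hne heq.symm
          exact Finset.le_sup (f := fun x => (hfin x).toFinset) hx hiF
      calc ∑ x ∈ s, f x ≤ ∑ x ∈ Finset.image (e F) Finset.univ, f x :=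
            Finset.sum_le_sum_of_subset hsub
        _ = ∏ i ∈ F, (Fintype.card (G i) : ℝ≥0∞) / ((Module.finrank ℂ (V i) : ℝ≥0∞)) ^ (2 : ℕ) :=
            key F
        _ ≤ _ := le_iSup (fun F : Finset I => ∏ i ∈ F,
            (Fintype.card (G i) : ℝ≥0∞) / ((Module.finrank ℂ (V i) : ℝ≥0∞)) ^ (2 : ℕ)) F
    · refine iSup_le fun F => ?_
      rw [← key F]
      exact le_iSup (fun s : Finset ↥(restrictedProduct G) => ∑ x ∈ s, f x) _
  have htsum : ∑' x : ↥(restrictedProduct G), ((‖ω x‖₊ : ℝ≥0∞) ^ (2 : ℝ)) =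
      ∑' x : ↥(restrictedProduct G), f x := tsum_congr hfx
  constructor
  · rw [htsum, hmain]
  · rw [← hmain]
    have hp2 : (0 : ℝ) < (2 : ℝ≥0∞).toReal := by norm_num
    rw [memℓp_gen_iff hp2]
    have hsummeq : (Summable fun x : ↥(restrictedProduct G) => ‖ω x‖ ^ (2 : ℝ≥0∞).toReal) ↔
        Summable fun x : ↥(restrictedProduct G) => ((‖ω x‖₊ ^ 2 : ℝ≥0) : ℝ) := by
      apply summable_congr
      intro x
      rw [show (2 : ℝ≥0∞).toReal = ((2 : ℕ) : ℝ) by norm_num, Real.rpow_natCast]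
      push_cast
      ring
    rw [hsummeq, NNReal.summable_coe, ← ENNReal.tsum_coe_ne_top_iff_summable, lt_top_iff_ne_top]
end

section
/- Let (G_i)_{i∈I} be a family of finite groups with each |G_i| ≥ 2, G = ⊕ G_i, and for each i let χ_i be an irreducible character of G_i of degree d_i. Define the maximal character ratio mcr(χ_i) = max{ d_i^{-1}|χ_i(g)| : g ∈ G_i \ {e} }, and ω: G → ℂ by ω(x) = Π_i d_i^{-1} χ_i(x_i). Then ω ∈ c₀(G) (i.e., for every ε > 0 the set {x ∈ G : |ω(x)| ≥ ε} is finite) if and only if for every ε > 0 the set {i ∈ I : mcr(χ_i) ≥ ε} is finite. -/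
open scoped ENNReal NNReal BigOperators
open CategoryTheory


open Polynomial in
private lemma norm_trace_le_of_pow_eq_one {d : ℕ} (A : Matrix (Fin d) (Fin d) ℂ) {n : ℕ}
    (hn : n ≠ 0) (h : A ^ n = 1) : ‖A.trace‖ ≤ d := by
  classical
  have hroot : ∀ lam ∈ A.charpoly.roots, ‖lam‖ = 1 := by
    intro lam hlam
    have hIsRoot : A.charpoly.IsRoot lam :=
      (Polynomial.mem_roots A.charpoly_monic.ne_zero).1 hlam
    have hdet : (Matrix.scalar (Fin d) lam - A).det = 0 := by
      have h0 := hIsRoot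
      rw [Polynomial.IsRoot, Matrix.charpoly, eval_det,
        Matrix.matPolyEquiv_charmatrix] at h0
      simpa using h0
    obtain ⟨v, hv, hmul⟩ := (Matrix.exists_mulVec_eq_zero_iff).2 hdet
    have hAv : A.mulVec v = lam • v := by
      have h1 : (Matrix.scalar (Fin d) lam).mulVec v - A.mulVec v = 0 := by
        rw [← Matrix.sub_mulVec]; exact hmul
      have h2 : (Matrix.scalar (Fin d) lam).mulVec v = lam • v := by
        have hs : Matrix.scalar (Fin d) lam = lam • (1 : Matrix (Fin d) (Fin d) ℂ) := by
          ext i j; simp [Matrix.scalar_apply, Matrix.one_apply, Matrix.diagonal]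
        rw [hs, Matrix.smul_mulVec, Matrix.one_mulVec]
      rw [h2, sub_eq_zero] at h1
      exact h1.symm
    have hpow : ∀ k : ℕ, (A ^ k).mulVec v = lam ^ k • v := by
      intro k
      induction k with
      | zero => simp [Matrix.one_mulVec]
      | succ k ih =>
        rw [pow_succ', pow_succ', ← Matrix.mulVec_mulVec, ih, Matrix.mulVec_smul, hAv,
          smul_smul, mul_comm]
    have hlamn : lam ^ n = 1 := by
      have hv2 := hpow n
      rw [h, Matrix.one_mulVec] at hv2
      obtain ⟨j, hj⟩ := Function.ne_iff.1 hv
      have h3 := congrFun hv2 j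
      simp only [Pi.smul_apply, smul_eq_mul] at h3
      exact mul_right_cancel₀ hj (by rw [← h3, one_mul])
    exact Complex.norm_eq_one_of_pow_eq_one hlamn hn
  have hrep : A.charpoly.roots.map norm = Multiset.replicate (Multiset.card A.charpoly.roots) 1 :=
    Multiset.eq_replicate.2 ⟨by simp, by
      intro b hb
      obtain ⟨lam, hlam, rfl⟩ := Multiset.mem_map.1 hb
      exact hroot lam hlam⟩
  calc ‖A.trace‖ = ‖A.charpoly.roots.sum‖ := by rw [Matrix.trace_eq_sum_roots_charpoly]
    _ ≤ (A.charpoly.roots.map norm).sum := norm_multiset_sum_le _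
    _ = (Multiset.card A.charpoly.roots : ℝ) := by rw [hrep, Multiset.sum_replicate]; simp
    _ ≤ (A.charpoly.natDegree : ℝ) := by exact_mod_cast Polynomial.card_roots' _
    _ = d := by rw [Matrix.charpoly_natDegree_eq_dim]; simp

private lemma norm_char_le (G : Type) [Group G] [Fintype G] (V : FDRep ℂ G) (g : G) :
    ‖V.character g‖ ≤ (Module.finrank ℂ V : ℝ) := by
  classical
  let b := Module.finBasis ℂ V
  let A := LinearMap.toMatrixAlgEquiv b (V.ρ g)
  have hA : A ^ Fintype.card G = 1 := by
    have hρ : (V.ρ g) ^ Fintype.card G = 1 := by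
      rw [← map_pow, pow_card_eq_one, map_one]
    rw [← map_pow, hρ, map_one]
  have htr : V.character g = A.trace := by
    rw [FDRep.character, LinearMap.trace_eq_matrix_trace ℂ b (V.ρ g)]
    rfl
  rw [htr]
  exact norm_trace_le_of_pow_eq_one A Fintype.card_ne_zero hA

private lemma finrank_pos_of_simple_s17 (G : Type) [Group G] (V : FDRep ℂ G) [Simple V] :
    0 < Module.finrank ℂ V := by
  rcases Nat.eq_zero_or_pos (Module.finrank ℂ V) with h | h
  · exfalso
    have hsub : Subsingleton (↑V.V.obj : Type) :=
      (Module.finrank_zero_iff (R := ℂ) (M := V)).mp h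
    apply CategoryTheory.id_nonzero V
    apply Action.hom_ext
    apply FGModuleCat.hom_ext
    exact LinearMap.ext fun x => Subsingleton.elim _ _
  · exact h

/-- For a restricted direct product `G = ⊕ᵢ Gᵢ` of nontrivial finite groups and irreducible
characters `χᵢ` of `Gᵢ`, the associated function `ω(x) = Πᵢ dᵢ⁻¹ χᵢ(xᵢ)` vanishes at
infinity (lies in `c₀(G)`) if and only if the maximal character ratios
`mcr(χᵢ) = max_{g ≠ e} dᵢ⁻¹|χᵢ(g)|` tend to `0` along `I` (each set `{i | mcr(χᵢ) ≥ ε}`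
is finite). -/
theorem c0_iff_mcr_c0 (I : Type) (G : I → Type)
    [∀ i, Group (G i)] [∀ i, Fintype (G i)] [∀ i, Nontrivial (G i)]
    (V : ∀ i, FDRep ℂ (G i)) [∀ i, Simple (V i)]
    (ω : ↥(restrictedProduct G) → ℂ)
    (hω : ∀ x : ↥(restrictedProduct G),
      ω x = ∏ᶠ i, ((Module.finrank ℂ (V i) : ℂ))⁻¹ * (V i).character (x.1 i))
    (m : I → ℝ)
    (hm : ∀ i, m i = ⨆ g : {g : G i // g ≠ 1},
      ‖(V i).character g‖ / (Module.finrank ℂ (V i) : ℝ)) :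
    (∀ ε : ℝ, 0 < ε → {x : ↥(restrictedProduct G) | ε ≤ ‖ω x‖}.Finite) ↔
      (∀ ε : ℝ, 0 < ε → {i : I | ε ≤ m i}.Finite) := by
  
  classical
  have hfin : ∀ x : ↥(restrictedProduct G), (piSupport x.1).Finite := fun x => x.2
  set d : I → ℕ := fun i => Module.finrank ℂ (V i) with hd
  have hdpos : ∀ i, 0 < d i := fun i => finrank_pos_of_simple_s17 _ (V i)
  have hdC : ∀ i, ((d i : ℂ)) ≠ 0 := fun i => Nat.cast_ne_zero.2 (hdpos i).ne'
  have hne : ∀ i, Nonempty {g : G i // g ≠ 1} := by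
    intro i; obtain ⟨g, hg⟩ := exists_ne (1 : G i); exact ⟨⟨g, hg⟩⟩
  have hf1 : ∀ (x : ↥(restrictedProduct G)) i, x.1 i = 1 →
      ((d i : ℂ))⁻¹ * (V i).character (x.1 i) = 1 := by
    intro x i h
    rw [h, FDRep.char_one, inv_mul_cancel₀ (hdC i)]
  have hfnorm : ∀ (i : I) (g : G i), ‖((d i : ℂ))⁻¹ * (V i).character g‖ =
      ‖(V i).character g‖ / (d i : ℝ) := by
    intro i g
    rw [norm_mul, norm_inv, Complex.norm_natCast, div_eq_inv_mul]
  have hr_nonneg : ∀ (i : I) (g : G i), 0 ≤ ‖(V i).character g‖ / (d i : ℝ) :=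
    fun i g => div_nonneg (norm_nonneg _) (by positivity)
  have hr_le_m : ∀ (i : I) (g : G i), g ≠ 1 → ‖(V i).character g‖ / (d i : ℝ) ≤ m i := by
    intro i g hg
    rw [hm i]
    exact le_ciSup (f := fun g : {g : G i // g ≠ 1} => ‖(V i).character g.1‖ / (d i : ℝ))
      (Set.Finite.bddAbove (Set.finite_range _)) ⟨g, hg⟩
  have hm0 : ∀ i, 0 ≤ m i := by
    intro i; rw [hm i]
    exact Real.iSup_nonneg fun g => hr_nonneg i g.1
  have hm1 : ∀ i, m i ≤ 1 := by
    intro i; rw [hm i]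
    exact ciSup_le fun g => (div_le_one (by exact_mod_cast hdpos i)).2 (norm_char_le _ (V i) g.1)
  have hm_att : ∀ i, ∃ g : G i, g ≠ 1 ∧ ‖(V i).character g‖ / (d i : ℝ) = m i := by
    intro i
    obtain ⟨g0, hg0⟩ := Finite.exists_max
      (fun g : {g : G i // g ≠ 1} => ‖(V i).character g.1‖ / (d i : ℝ))
    refine ⟨g0.1, g0.2, le_antisymm (hr_le_m _ _ g0.2) ?_⟩
    rw [hm i]
    exact ciSup_le fun g => hg0 g
  have homega : ∀ x : ↥(restrictedProduct G),
      ‖ω x‖ = ∏ j ∈ (hfin x).toFinset, ‖(V j).character (x.1 j)‖ / (d j : ℝ) := by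
    intro x
    rw [hω x, finprod_eq_prod_of_mulSupport_subset _
      (s := (hfin x).toFinset) ?_, norm_prod]
    · exact Finset.prod_congr rfl fun j _ => hfnorm j (x.1 j)
    · intro j hj
      rw [Function.mem_mulSupport] at hj
      rw [Finset.mem_coe, Set.Finite.mem_toFinset]
      intro h1
      exact hj (hf1 x j h1)
  constructor
  · intro hc ε hε
    choose gm hgm1 hgmr using hm_att
    have hmem : ∀ i : I, Pi.mulSingle i (gm i) ∈ restrictedProduct G := by
      intro i
      show (piSupport (Pi.mulSingle i (gm i))).Finite
      refine (Set.finite_singleton i).subset ?_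
      intro j hj
      by_contra hji
      exact hj (Pi.mulSingle_eq_of_ne (by simpa using hji) _)
    set xe : I → ↥(restrictedProduct G) := fun i => ⟨Pi.mulSingle i (gm i), hmem i⟩ with hxe
    have hωxe : ∀ i, ‖ω (xe i)‖ = m i := by
      intro i
      have h1 : ω (xe i) = ((d i : ℂ))⁻¹ * (V i).character ((xe i).1 i) := by
        rw [hω]
        refine finprod_eq_single _ i fun j hj => hf1 _ j ?_
        exact Pi.mulSingle_eq_of_ne hj _
      rw [h1, hfnorm]
      have : (xe i).1 i = gm i := Pi.mulSingle_eq_same i (gm i)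
      rw [this, hgmr]
    refine Set.Finite.of_finite_image (f := xe) (((hc ε hε)).subset ?_) ?_
    · rintro _ ⟨i, hi, rfl⟩
      show ε ≤ ‖ω (xe i)‖
      rw [hωxe]
      exact hi
    · intro i _ j _ hij
      by_contra hne2
      have h2 : Pi.mulSingle i (gm i) i = Pi.mulSingle j (gm j) i :=
        congrFun (congrArg Subtype.val hij) i
      rw [Pi.mulSingle_eq_same, Pi.mulSingle_eq_of_ne hne2] at h2
      exact hgm1 i h2
  · intro hc ε hε
    have hS := hc ε hε
    have hfinbig : {x : ↥(restrictedProduct G) | piSupport x.1 ⊆ {i : I | ε ≤ m i}}.Finite := by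
      refine Set.Finite.of_finite_image
        (f := fun x => fun j : hS.toFinset => x.1 j) (Set.toFinite _) ?_
      intro x hx y hy hxy
      apply Subtype.ext
      funext j
      by_cases hj : j ∈ {i : I | ε ≤ m i}
      · exact congrFun hxy ⟨j, hS.mem_toFinset.2 hj⟩
      · have hxj : x.1 j = 1 := by by_contra h1; exact hj (hx h1)
        have hyj : y.1 j = 1 := by by_contra h1; exact hj (hy h1)
        rw [hxj, hyj]
    refine hfinbig.subset ?_
    intro x hx i hi
    have hx' : ε ≤ ‖ω x‖ := hx
    have himem : i ∈ (hfin x).toFinset := (hfin x).mem_toFinset.2 hi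
    have hxi : x.1 i ≠ 1 := hi
    show ε ≤ m i
    calc ε ≤ ‖ω x‖ := hx'
      _ = ∏ j ∈ (hfin x).toFinset, ‖(V j).character (x.1 j)‖ / (d j : ℝ) := homega x
      _ = (‖(V i).character (x.1 i)‖ / (d i : ℝ)) *
          ∏ j ∈ (hfin x).toFinset.erase i, ‖(V j).character (x.1 j)‖ / (d j : ℝ) :=
        (Finset.mul_prod_erase _ _ himem).symm
      _ ≤ m i * 1 := by
        refine mul_le_mul (hr_le_m i _ hxi) ?_
          (Finset.prod_nonneg fun j _ => hr_nonneg j _) (hm0 i)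
        refine Finset.prod_le_one (fun j _ => hr_nonneg j _) ?_
        intro j hj
        have hjs : x.1 j ≠ 1 := ((hfin x).mem_toFinset.1 (Finset.mem_of_mem_erase hj))
        exact (hr_le_m j _ hjs).trans (hm1 j)
      _ = m i := mul_one _
end
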